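/- arXiv:2602.13281 — 2 statements merged into one kernel-verified Lean document; each statement's English description precedes it below -/
import Mathlib

section
/- Let M be an n×n nonnegative irreducible real matrix with ρ(M) = 1, and let f ∈ ℝⁿ be a nonnegative vector. Then the linear system (I − M) x = f has a nonnegative solution x ∈ ℝⁿ if and only if f = 0. -/
/-- A real square matrix is (entrywise) nonnegative. -/
def Matrix.IsNonneg {n : ℕ} (M : Matrix (Fin n) (Fin n) ℝ) : Prop :=
  ∀ i j, 0 ≤ M i j

/-- A nonnegative matrix is irreducible if for every pair of indices `(i, j)` there is a
positive power of the matrix whose `(i, j)` entry is positive. -/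
def Matrix.IsIrred {n : ℕ} (M : Matrix (Fin n) (Fin n) ℝ) : Prop :=
  ∀ i j, ∃ k : ℕ, 0 < k ∧ 0 < (M ^ k) i j

/-- The spectral radius of a real square matrix: the maximum of the absolute values of its
complex eigenvalues (the complex roots of its characteristic polynomial). -/
noncomputable def Matrix.specRad {n : ℕ} (M : Matrix (Fin n) (Fin n) ℝ) : ℝ :=
  sSup {r : ℝ | ∃ z : ℂ, (Polynomial.aeval z) M.charpoly = 0 ∧ r = ‖z‖}

section AuxPF
open Matrix Polynomial Finset

/-- Powers of a nonneg matrix are nonneg. -/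
lemma pow_nonneg_aux {n : ℕ} {M : Matrix (Fin n) (Fin n) ℝ}
    (hM : ∀ i j, 0 ≤ M i j) (k : ℕ) : ∀ i j, 0 ≤ (M ^ k) i j := by
  induction k with
  | zero => intro i j; simp [Matrix.one_apply]; positivity
  | succ k ih =>
    intro i j
    rw [pow_succ, Matrix.mul_apply]
    exact Finset.sum_nonneg fun l _ => mul_nonneg (ih i l) (hM l j)

lemma mulVec_nonneg_aux {n : ℕ} {A : Matrix (Fin n) (Fin n) ℝ}
    (hA : ∀ i j, 0 ≤ A i j) {v : Fin n → ℝ} (hv : ∀ i, 0 ≤ v i) (i : Fin n) :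
    0 ≤ A.mulVec v i := by
  rw [Matrix.mulVec, dotProduct]
  exact Finset.sum_nonneg fun l _ => mul_nonneg (hA i l) (hv l)

lemma mulVec_mono_aux {n : ℕ} {A : Matrix (Fin n) (Fin n) ℝ}
    (hA : ∀ i j, 0 ≤ A i j) {u v : Fin n → ℝ} (huv : ∀ i, u i ≤ v i) (i : Fin n) :
    A.mulVec u i ≤ A.mulVec v i := by
  rw [Matrix.mulVec, dotProduct, Matrix.mulVec, dotProduct]
  exact Finset.sum_le_sum fun l _ => mul_le_mul_of_nonneg_left (huv l) (hA i l)

/-- eval of charpoly is the determinant of `z • 1 - A`. -/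
lemma eval_charpoly_aux {n : ℕ} (A : Matrix (Fin n) (Fin n) ℂ) (z : ℂ) :
    A.charpoly.eval z = (z • (1 : Matrix (Fin n) (Fin n) ℂ) - A).det := by
  rw [Matrix.charpoly, ← Polynomial.coe_evalRingHom, RingHom.map_det]
  congr 1
  ext i j
  by_cases h : i = j
  · subst h
    simp [Matrix.charmatrix_apply_eq, Matrix.one_apply, Matrix.smul_apply]
  · simp [Matrix.charmatrix_apply_ne _ _ _ h, Matrix.one_apply_ne h, Matrix.smul_apply,
      Matrix.sub_apply]

lemma exists_eigen_aux {n : ℕ} [NeZero n] (M : Matrix (Fin n) (Fin n) ℝ)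
    (hρ : M.specRad = 1) :
    ∃ (z : ℂ) (v : Fin n → ℂ), ‖z‖ = 1 ∧ v ≠ 0 ∧
      (M.map (algebraMap ℝ ℂ)).mulVec v = z • v := by
  classical
  set p := M.charpoly.map (algebraMap ℝ ℂ) with hp
  have hmono : M.charpoly.Monic := M.charpoly_monic
  have hpne : p ≠ 0 := (hmono.map _).ne_zero
  have hroot_eq : ∀ z : ℂ, (Polynomial.aeval z) M.charpoly = 0 ↔ p.IsRoot z := by
    intro z
    rw [Polynomial.aeval_def, Polynomial.eval₂_eq_eval_map, hp, Polynomial.IsRoot]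
  have hSfin : ({r : ℝ | ∃ z : ℂ, (Polynomial.aeval z) M.charpoly = 0 ∧ r = ‖z‖}).Finite := by
    have : {r : ℝ | ∃ z : ℂ, (Polynomial.aeval z) M.charpoly = 0 ∧ r = ‖z‖}
        = norm '' {z : ℂ | p.IsRoot z} := by
      ext r
      simp only [Set.mem_setOf_eq, Set.mem_image]
      constructor
      · rintro ⟨z, h1, h2⟩; exact ⟨z, (hroot_eq z).1 h1, h2.symm⟩
      · rintro ⟨z, h1, h2⟩; exact ⟨z, (hroot_eq z).2 h1, h2.symm⟩
    rw [this]
    exact (Polynomial.finite_setOf_isRoot hpne).image _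
  have hSne : ({r : ℝ | ∃ z : ℂ, (Polynomial.aeval z) M.charpoly = 0 ∧ r = ‖z‖}).Nonempty := by
    have hdeg : p.degree ≠ 0 := by
      rw [hp, hmono.degree_map, M.charpoly_degree_eq_dim]
      simp [Fintype.card_fin]
      exact NeZero.ne n
    obtain ⟨z, hz⟩ := Complex.isAlgClosed.exists_root p hdeg
    exact ⟨‖z‖, z, (hroot_eq z).2 hz, rfl⟩
  have hmem := Set.Nonempty.csSup_mem hSne hSfin
  rw [show sSup {r : ℝ | ∃ z : ℂ, (Polynomial.aeval z) M.charpoly = 0 ∧ r = ‖z‖} = M.specRad from rfl, hρ] at hmem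
  obtain ⟨z, hz, habs⟩ := hmem
  -- z is a root, find eigenvector
  have hdet : (z • (1 : Matrix (Fin n) (Fin n) ℂ) - M.map (algebraMap ℝ ℂ)).det = 0 := by
    rw [← eval_charpoly_aux]
    rw [Matrix.charpoly_map]
    exact (hroot_eq z).1 hz
  obtain ⟨v, hv0, hv⟩ := (Matrix.exists_mulVec_eq_zero_iff).2 hdet
  refine ⟨z, v, habs.symm, hv0, ?_⟩
  rw [Matrix.sub_mulVec, Matrix.smul_mulVec, Matrix.one_mulVec, sub_eq_zero] at hv
  exact hv.symm

end AuxPF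

/-- If `M` is nonnegative, irreducible, with spectral radius `1`, and `f` is nonnegative, then
`(I - M) x = f` has a nonnegative solution if and only if `f = 0`. -/
theorem shifted_system_critical_case {n : ℕ}
    (M : Matrix (Fin n) (Fin n) ℝ) (hM : M.IsNonneg) (hirr : M.IsIrred)
    (hρ : M.specRad = 1) (f : Fin n → ℝ) (hf : ∀ i, 0 ≤ f i) :
    (∃ x : Fin n → ℝ, (∀ i, 0 ≤ x i) ∧ (1 - M).mulVec x = f) ↔ f = 0 := by
  classical
  constructor
  · rintro ⟨x, hx0, hxf⟩
    by_contra hfne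
    obtain ⟨j, hj⟩ := Function.ne_iff.1 hfne
    have hfj : 0 < f j := lt_of_le_of_ne (hf j) (Ne.symm hj)
    have hn : NeZero n := ⟨fun h => absurd (h ▸ j).isLt (by simp [h])⟩
    -- M x = x - f
    have hMx : M.mulVec x = x - f := by
      rw [Matrix.sub_mulVec, Matrix.one_mulVec] at hxf
      rw [← hxf]; ring_nf
    -- iteration
    have hiter : ∀ k : ℕ, (M ^ k).mulVec x = x - ∑ l ∈ Finset.range k, (M ^ l).mulVec f := by
      intro k
      induction k with
      | zero => simp [Matrix.one_mulVec]
      | succ k ih =>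
        rw [pow_succ, ← Matrix.mulVec_mulVec, hMx, Matrix.mulVec_sub, ih,
          Finset.sum_range_succ]
        abel
    -- choose powers reaching j
    have hk : ∀ i : Fin n, ∃ k : ℕ, 0 < k ∧ 0 < (M ^ k) i j := fun i => hirr i j
    choose kk hkpos hkMpos using hk
    set m : ℕ := (Finset.univ.sup kk) + 1 with hm
    have hklt : ∀ i, kk i ∈ Finset.range m := by
      intro i
      exact Finset.mem_range.2 (Nat.lt_succ_of_le (Finset.le_sup (Finset.mem_univ i)))
    set w : Fin n → ℝ := ∑ l ∈ Finset.range m, (M ^ l).mulVec f with hw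
    have hterm_nonneg : ∀ l, ∀ i, 0 ≤ ((M ^ l).mulVec f) i := fun l i =>
      mulVec_nonneg_aux (pow_nonneg_aux hM l) hf i
    have hwpos : ∀ i, 0 < w i := by
      intro i
      have : w i = ∑ l ∈ Finset.range m, ((M ^ l).mulVec f) i := by
        rw [hw]; simp [Finset.sum_apply]
      rw [this]
      apply Finset.sum_pos' (fun l _ => hterm_nonneg l i)
      refine ⟨kk i, hklt i, ?_⟩
      have : (M ^ kk i) i j * f j ≤ ((M ^ kk i).mulVec f) i := by
        rw [Matrix.mulVec, dotProduct]
        exact Finset.single_le_sum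
          (fun l _ => mul_nonneg (pow_nonneg_aux hM _ i l) (hf l)) (Finset.mem_univ j)
      exact lt_of_lt_of_le (mul_pos (hkMpos i) hfj) this
    have hMmx : (M ^ m).mulVec x = x - w := hiter m
    have hMmx_nonneg : ∀ i, 0 ≤ ((M ^ m).mulVec x) i := fun i =>
      mulVec_nonneg_aux (pow_nonneg_aux hM m) hx0 i
    have hxpos : ∀ i, 0 < x i := by
      intro i
      have := hMmx_nonneg i
      rw [hMmx] at this
      simp only [Pi.sub_apply] at this
      linarith [hwpos i]
    have hne : (Finset.univ : Finset (Fin n)).Nonempty := ⟨j, Finset.mem_univ j⟩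
    set c : ℝ := Finset.univ.sup' hne (fun i => (x i - w i) / x i) with hc
    have hc1 : c < 1 := by
      rw [hc, Finset.sup'_lt_iff]
      intro i _
      rw [div_lt_one (hxpos i)]
      linarith [hwpos i]
    have hkey : ∀ i, ((M ^ m).mulVec x) i ≤ c * x i := by
      intro i
      rw [hMmx]
      simp only [Pi.sub_apply]
      have h1 : (x i - w i) / x i ≤ c := Finset.le_sup' (fun i => (x i - w i) / x i) (Finset.mem_univ i)
      calc x i - w i = (x i - w i) / x i * x i := by
            rw [div_mul_cancel₀ _ (hxpos i).ne']
        _ ≤ c * x i := mul_le_mul_of_nonneg_right h1 (hxpos i).le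
    -- eigenvector
    obtain ⟨z, v, habs, hv0, hv⟩ := exists_eigen_aux M hρ
    have hvk : ∀ k : ℕ, ((M.map (algebraMap ℝ ℂ)) ^ k).mulVec v = z ^ k • v := by
      intro k
      induction k with
      | zero => simp [Matrix.one_mulVec]
      | succ k ih =>
        rw [pow_succ, ← Matrix.mulVec_mulVec, hv, Matrix.mulVec_smul, ih, pow_succ]
        rw [smul_smul, mul_comm]
    set u : Fin n → ℝ := fun i => ‖v i‖ with hu
    have hu0 : ∀ i, 0 ≤ u i := fun i => norm_nonneg _
    have hupos : ∃ i, 0 < u i := by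
      obtain ⟨i, hi⟩ := Function.ne_iff.1 hv0
      exact ⟨i, by simpa [hu] using (norm_pos_iff.mpr hi)⟩
    have hmappow : (M.map (algebraMap ℝ ℂ)) ^ m = (M ^ m).map (algebraMap ℝ ℂ) := by
      have := map_pow ((algebraMap ℝ ℂ).mapMatrix) M m
      simpa [RingHom.mapMatrix_apply] using this.symm
    have hu_le : ∀ i, u i ≤ ((M ^ m).mulVec u) i := by
      intro i
      have h1 : ‖(((M.map (algebraMap ℝ ℂ)) ^ m).mulVec v i)‖ = u i := by
        rw [hvk m]
        simp only [Pi.smul_apply, smul_eq_mul, norm_mul, norm_pow, habs, one_pow, one_mul, hu]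
      rw [← h1, hmappow]
      rw [Matrix.mulVec, dotProduct]
      calc ‖(∑ l, ((M ^ m).map (algebraMap ℝ ℂ)) i l * v l)‖
          ≤ ∑ l, ‖(((M ^ m).map (algebraMap ℝ ℂ)) i l * v l)‖ := by
            exact norm_sum_le _ _
        _ = ((M ^ m).mulVec u) i := by
            rw [Matrix.mulVec, dotProduct]
            apply Finset.sum_congr rfl
            intro l _
            rw [norm_mul]
            congr 1
            simp [Matrix.map_apply, Complex.norm_real, Real.norm_eq_abs, abs_of_nonneg (pow_nonneg_aux hM m i l)]
    -- scaling argument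
    obtain ⟨i0, _, hi0⟩ := Finset.exists_mem_eq_sup' hne (fun i => u i / x i)
    set t : ℝ := Finset.univ.sup' hne (fun i => u i / x i) with ht
    have htpos : 0 < t := by
      obtain ⟨i, hi⟩ := hupos
      calc (0:ℝ) < u i / x i := div_pos hi (hxpos i)
        _ ≤ t := by rw [ht]; exact Finset.le_sup' (fun i => u i / x i) (Finset.mem_univ i)
    have hut : ∀ i, u i ≤ t * x i := by
      intro i
      have : u i / x i ≤ t := by
        rw [ht]; exact Finset.le_sup' (fun i => u i / x i) (Finset.mem_univ i)
      calc u i = u i / x i * x i := by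
            rw [div_mul_cancel₀ _ (hxpos i).ne']
        _ ≤ t * x i := mul_le_mul_of_nonneg_right this (hxpos i).le
    have hchain : u i0 ≤ t * (c * x i0) := by
      calc u i0 ≤ ((M ^ m).mulVec u) i0 := hu_le i0
        _ ≤ ((M ^ m).mulVec (fun i => t * x i)) i0 :=
            mulVec_mono_aux (pow_nonneg_aux hM m) hut i0
        _ = t * ((M ^ m).mulVec x) i0 := by
            rw [Matrix.mulVec, dotProduct, Matrix.mulVec, dotProduct,
              Finset.mul_sum]
            congr 1; ext l; ring
        _ ≤ t * (c * x i0) := mul_le_mul_of_nonneg_left (hkey i0) htpos.le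
    have hui0 : u i0 = t * x i0 := by
      have ht0 : t = u i0 / x i0 := hi0
      rw [ht0, div_mul_cancel₀ _ (hxpos i0).ne']
    rw [hui0] at hchain
    have : (1:ℝ) ≤ c := by
      have hpos : 0 < t * x i0 := mul_pos htpos (hxpos i0)
      nlinarith
    linarith
  · rintro rfl
    exact ⟨0, fun i => le_refl 0, by simp [Matrix.mulVec_zero]⟩
end

section
/- Let M be an n×n nonnegative irreducible real matrix with Perron–Frobenius eigenvalue λ = ρ(M). Then the adjugate matrix adj(λ I − M) is entrywise strictly positive. In particular, each column of adj(λ I − M) is a nonzero vector in the kernel of λ I − M, i.e. an eigenvector of M for the eigenvalue λ. -/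
open Matrix Polynomial

namespace PFaux

variable {n : ℕ}

lemma mulVec_nonneg {M : Matrix (Fin n) (Fin n) ℝ} (hM : ∀ i j, 0 ≤ M i j)
    {v : Fin n → ℝ} (hv : ∀ i, 0 ≤ v i) : ∀ i, 0 ≤ M.mulVec v i := by
  intro i
  simp only [Matrix.mulVec, dotProduct]
  exact Finset.sum_nonneg fun j _ => mul_nonneg (hM i j) (hv j)

lemma pow_nonneg {M : Matrix (Fin n) (Fin n) ℝ} (hM : ∀ i j, 0 ≤ M i j) :
    ∀ k : ℕ, ∀ i j, 0 ≤ (M ^ k) i j := by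
  intro k
  induction k with
  | zero => intro i j; by_cases h : i = j <;> simp [pow_zero, Matrix.one_apply, h]
  | succ m ih =>
    intro i j
    rw [pow_succ, Matrix.mul_apply]
    exact Finset.sum_nonneg fun l _ => mul_nonneg (ih i l) (hM l j)

lemma one_add_pow_nonneg {M : Matrix (Fin n) (Fin n) ℝ} (hM : ∀ i j, 0 ≤ M i j) :
    ∀ k : ℕ, ∀ i j, 0 ≤ ((1 + M) ^ k) i j := by
  refine pow_nonneg (fun i j => ?_)
  by_cases h : i = j
  · simp only [Matrix.add_apply, Matrix.one_apply, h, if_true]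
    linarith [hM j j]
  · simp only [Matrix.add_apply, Matrix.one_apply, h, if_false, zero_add]
    exact hM i j

lemma one_add_pow_ge_pow {M : Matrix (Fin n) (Fin n) ℝ} (hM : ∀ i j, 0 ≤ M i j) :
    ∀ k : ℕ, ∀ i j, (M ^ k) i j ≤ ((1 + M) ^ k) i j := by
  intro k
  induction k with
  | zero => intro i j; simp
  | succ m ih =>
    intro i j
    rw [pow_succ, pow_succ, Matrix.mul_apply, Matrix.mul_apply]
    refine Finset.sum_le_sum fun l _ => ?_
    have h1 : (M ^ m) i l * M l j ≤ ((1 + M) ^ m) i l * M l j :=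
      mul_le_mul_of_nonneg_right (ih i l) (hM l j)
    have h2 : ((1 + M) ^ m) i l * M l j ≤ ((1 + M) ^ m) i l * (1 + M) l j := by
      refine mul_le_mul_of_nonneg_left ?_ (one_add_pow_nonneg hM m i l)
      by_cases h : l = j
      · simp only [Matrix.add_apply, Matrix.one_apply, h, if_true]; linarith
      · simp only [Matrix.add_apply, Matrix.one_apply, h, if_false, zero_add]; exact le_rfl
    linarith

lemma one_add_pow_succ_ge {M : Matrix (Fin n) (Fin n) ℝ} (hM : ∀ i j, 0 ≤ M i j)
    (m : ℕ) (i j : Fin n) : ((1 + M) ^ m) i j ≤ ((1 + M) ^ (m + 1)) i j := by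
  rw [pow_succ, Matrix.mul_apply]
  have h1 : ((1 + M) ^ m) i j = ((1+M)^m) i j * (1 + M) j j - ((1+M)^m) i j * M j j := by
    have : (1 + M) j j = 1 + M j j := by simp [Matrix.add_apply, Matrix.one_apply]
    rw [this]; ring
  rw [h1]
  have hle : ((1+M)^m) i j * (1 + M) j j ≤ ∑ l, ((1+M)^m) i l * (1+M) l j := by
    refine Finset.single_le_sum (f := fun l => ((1+M)^m) i l * (1+M) l j)
      (fun l _ => mul_nonneg (one_add_pow_nonneg hM m i l) ?_) (Finset.mem_univ j)
    by_cases h' : l = j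
    · simp only [Matrix.add_apply, Matrix.one_apply, h', if_true]; linarith [hM j j]
    · simp only [Matrix.add_apply, Matrix.one_apply, h', if_false, zero_add]; exact hM l j
  have := mul_nonneg (one_add_pow_nonneg hM m i j) (hM j j)
  linarith

lemma one_add_pow_mono {M : Matrix (Fin n) (Fin n) ℝ} (hM : ∀ i j, 0 ≤ M i j)
    {k l : ℕ} (hkl : k ≤ l) : ∀ i j, ((1 + M) ^ k) i j ≤ ((1 + M) ^ l) i j := by
  induction hkl with
  | refl => exact fun i j => le_rfl
  | step h ih => exact fun i j => le_trans (ih i j) (one_add_pow_succ_ge hM _ i j)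

/-- key: a power of `1 + M` is entrywise positive. -/
lemma exists_pow_pos {M : Matrix (Fin n) (Fin n) ℝ} (hM : ∀ i j, 0 ≤ M i j)
    (hirr : M.IsIrred) : ∃ p : ℕ, ∀ i j, 0 < ((1 + M) ^ p) i j := by
  choose k hk1 hk2 using hirr
  refine ⟨Finset.univ.sup (fun ij : Fin n × Fin n => k ij.1 ij.2), fun i j => ?_⟩
  have hle : k i j ≤ Finset.univ.sup (fun ij : Fin n × Fin n => k ij.1 ij.2) :=
    Finset.le_sup (f := fun ij : Fin n × Fin n => k ij.1 ij.2) (Finset.mem_univ (i, j))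
  calc (0:ℝ) < (M ^ (k i j)) i j := hk2 i j
    _ ≤ ((1 + M) ^ (k i j)) i j := one_add_pow_ge_pow hM _ i j
    _ ≤ _ := one_add_pow_mono hM hle i j





lemma pos_mulVec_pos {P : Matrix (Fin n) (Fin n) ℝ} (hP : ∀ i j, 0 < P i j)
    {v : Fin n → ℝ} (hv : ∀ i, 0 ≤ v i) (hv0 : v ≠ 0) : ∀ i, 0 < P.mulVec v i := by
  intro i
  obtain ⟨j, hj⟩ : ∃ j, 0 < v j := by
    by_contra h
    push_neg at h
    exact hv0 (funext fun j => le_antisymm (h j) (hv j))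
  simp only [Matrix.mulVec, dotProduct]
  refine Finset.sum_pos' (fun l _ => mul_nonneg (hP i l).le (hv l)) ⟨j, Finset.mem_univ j, ?_⟩
  exact mul_pos (hP i j) hj

lemma continuous_mulVec (A : Matrix (Fin n) (Fin n) ℝ) :
    Continuous fun v : Fin n → ℝ => A.mulVec v := by
  refine continuous_pi fun i => ?_
  simp only [Matrix.mulVec, dotProduct]
  exact continuous_finset_sum _ fun j _ => (continuous_const.mul (continuous_apply j))

theorem perron_aux (hn : 0 < n) {M : Matrix (Fin n) (Fin n) ℝ}
    (hM : ∀ i j, 0 ≤ M i j) (hirr : M.IsIrred) :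
    ∃ (l : ℝ) (x : Fin n → ℝ), (∀ i, 0 < x i) ∧ M.mulVec x = l • x ∧
      ∀ (v : Fin n → ℝ) (t : ℝ), (∀ i, 0 ≤ v i) → v ≠ 0 →
        (∀ i, t * v i ≤ M.mulVec v i) → t ≤ l := by
  haveI : NeZero n := ⟨hn.ne'⟩
  obtain ⟨p, hp⟩ := exists_pow_pos hM hirr
  set P := (1 + M) ^ p with hPdef
  have hPM : P * M = M * P := (((Commute.one_left M).add_left (Commute.refl M)).pow_left p)
  -- the compact set K
  set S := stdSimplex ℝ (Fin n) with hS
  have hSne : S.Nonempty := ⟨Pi.single 0 1, by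
    constructor
    · intro i
      by_cases h : i = 0 <;> simp [Pi.single_apply, h]
    · simp [Pi.single_apply]⟩
  have hSnn : ∀ x ∈ S, (∀ i, 0 ≤ x i) ∧ x ≠ 0 := by
    intro x hx
    refine ⟨hx.1, fun h0 => ?_⟩
    have := hx.2
    rw [h0] at this
    simp at this
  set K := (fun v => P.mulVec v) '' S with hK
  have hKco : IsCompact K := (isCompact_stdSimplex _ _).image (continuous_mulVec P)
  have hKne : K.Nonempty := hSne.image _
  have hKpos : ∀ y ∈ K, ∀ i, 0 < y i := by
    rintro y ⟨x, hx, rfl⟩ i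
    exact pos_mulVec_pos hp (hSnn x hx).1 (hSnn x hx).2 i
  -- the Collatz–Wielandt function
  set g : (Fin n → ℝ) → ℝ :=
    fun y => Finset.univ.inf' Finset.univ_nonempty (fun i => M.mulVec y i / y i) with hg
  have hgcont : ContinuousOn g K := by
    rw [hg]
    refine ContinuousOn.finset_inf'_apply Finset.univ_nonempty fun i _ => ?_
    exact (((continuous_apply i).comp (continuous_mulVec M)).continuousOn).div
      (continuous_apply i).continuousOn (fun y hy => (hKpos y hy i).ne')
  obtain ⟨x, hxK, hmax⟩ := hKco.exists_isMaxOn hKne hgcont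
  set l := g x with hl
  have hxpos : ∀ i, 0 < x i := hKpos x hxK
  have hlx : ∀ i, l * x i ≤ M.mulVec x i := by
    intro i
    have h1 : l ≤ M.mulVec x i / x i := Finset.inf'_le _ (Finset.mem_univ i)
    rwa [le_div_iff₀ (hxpos i)] at h1
  -- generic: from a nonneg "supereigenvector inequality" produce a point of K
  have hmk : ∀ (v : Fin n → ℝ), (∀ i, 0 ≤ v i) → v ≠ 0 →
      ∃ z ∈ K, ∃ s : ℝ, 0 < s ∧ z = s • P.mulVec v := by
    intro v hv hv0
    obtain ⟨j, hj⟩ : ∃ j, 0 < v j := by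
      by_contra h
      push_neg at h
      exact hv0 (funext fun j => le_antisymm (h j) (hv j))
    have hspos : 0 < ∑ i, v i :=
      Finset.sum_pos' (fun i _ => hv i) ⟨j, Finset.mem_univ j, hj⟩
    refine ⟨P.mulVec ((∑ i, v i)⁻¹ • v), ⟨(∑ i, v i)⁻¹ • v, ?_, rfl⟩, (∑ i, v i)⁻¹,
      inv_pos.mpr hspos, by rw [Matrix.mulVec_smul]⟩
    constructor
    · intro i
      exact mul_nonneg (inv_nonneg.mpr hspos.le) (hv i)
    · simp only [Pi.smul_apply, smul_eq_mul, ← Finset.mul_sum]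
      exact inv_mul_cancel₀ hspos.ne'
  -- generic computation of M z - t • z
  have hcomp : ∀ (v : Fin n → ℝ) (t s : ℝ),
      M.mulVec (s • P.mulVec v) - t • (s • P.mulVec v)
        = s • P.mulVec (M.mulVec v - t • v) := by
    intro v t s
    rw [Matrix.mulVec_smul, Matrix.mulVec_sub, Matrix.mulVec_smul, Matrix.mulVec_mulVec,
      ← hPM, ← Matrix.mulVec_mulVec, smul_sub]
    rw [smul_comm t s]
  have hCW : ∀ (v : Fin n → ℝ) (t : ℝ), (∀ i, 0 ≤ v i) → v ≠ 0 →
      (∀ i, t * v i ≤ M.mulVec v i) → t ≤ l := by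
    intro v t hv hv0 hle
    obtain ⟨z, hzK, s, hs, hzdef⟩ := hmk v hv hv0
    have hzpos := hKpos z hzK
    have h2 : ∀ i, t * z i ≤ M.mulVec z i := by
      intro i
      have h3 : 0 ≤ P.mulVec (M.mulVec v - t • v) i :=
        mulVec_nonneg (fun a b => (hp a b).le) (fun a => by
          simp only [Pi.sub_apply, Pi.smul_apply, smul_eq_mul, sub_nonneg]
          exact hle a) i
      have h4 := congrFun (hzdef ▸ hcomp v t s) i
      simp only [Pi.sub_apply, Pi.smul_apply, smul_eq_mul] at h4
      nlinarith [mul_nonneg hs.le h3]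
    have h5 : t ≤ g z := by
      refine Finset.le_inf' _ _ fun i _ => ?_
      rw [le_div_iff₀ (hKpos z hzK i)]
      exact h2 i
    exact h5.trans (hmax hzK)
  have heig : M.mulVec x = l • x := by
    by_contra hne
    set w : Fin n → ℝ := fun i => M.mulVec x i - l * x i with hwdef
    have hw0 : ∀ i, 0 ≤ w i := fun i => sub_nonneg.mpr (hlx i)
    have hwne : w ≠ 0 := by
      intro h
      refine hne (funext fun i => ?_)
      have := congrFun h i
      simp only [hwdef, Pi.zero_apply] at this
      simp only [Pi.smul_apply, smul_eq_mul]
      linarith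
    have hxne : x ≠ 0 := by
      intro h
      have := congrFun h 0
      simp at this
      exact absurd this (hxpos 0).ne'
    obtain ⟨z, hzK, s, hs, hzdef⟩ := hmk x (fun i => (hxpos i).le) hxne
    have hzpos := hKpos z hzK
    have h2 : ∀ i, l * z i < M.mulVec z i := by
      intro i
      have h3 : 0 < P.mulVec w i := pos_mulVec_pos hp hw0 hwne i
      have hweq : (M.mulVec x - l • x) = w := by
        funext a; simp [hwdef]
      have h4 := congrFun (hzdef ▸ hcomp x l s) i
      rw [hweq] at h4
      simp only [Pi.sub_apply, Pi.smul_apply, smul_eq_mul] at h4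
      nlinarith [mul_pos hs h3]
    have h5 : l < g z := by
      rw [hg, Finset.lt_inf'_iff]
      intro i _
      rw [lt_div_iff₀ (hKpos z hzK i)]
      exact h2 i
    exact absurd (hmax hzK) (not_le.mpr h5)
  exact ⟨l, x, hxpos, heig, hCW⟩



lemma eval_charpoly {R : Type*} [CommRing R] {m : ℕ} (A : Matrix (Fin m) (Fin m) R) (t : R) :
    A.charpoly.eval t = (t • (1 : Matrix (Fin m) (Fin m) R) - A).det := by
  rw [Matrix.charpoly, ← Polynomial.coe_evalRingHom, RingHom.map_det]
  congr 1
  ext i j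
  by_cases h : i = j
  · subst h
    simp [Matrix.charmatrix_apply, Matrix.one_apply, Matrix.diagonal_apply]
  · simp [Matrix.charmatrix_apply, Matrix.one_apply, Matrix.diagonal_apply, h]

lemma aeval_charpoly_eq_det {m : ℕ} (A : Matrix (Fin m) (Fin m) ℝ) (z : ℂ) :
    (Polynomial.aeval z) A.charpoly
      = (z • (1 : Matrix (Fin m) (Fin m) ℂ) - A.map (algebraMap ℝ ℂ)).det := by
  rw [Polynomial.aeval_def, Polynomial.eval₂_eq_eval_map, ← Matrix.charpoly_map,
    eval_charpoly]

lemma root_iff_eigenvector {m : ℕ} (A : Matrix (Fin m) (Fin m) ℝ) (z : ℂ) :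
    (Polynomial.aeval z) A.charpoly = 0 ↔
      ∃ v : Fin m → ℂ, v ≠ 0 ∧ (A.map (algebraMap ℝ ℂ)).mulVec v = z • v := by
  rw [aeval_charpoly_eq_det, ← Matrix.exists_mulVec_eq_zero_iff]
  constructor
  · rintro ⟨v, hv0, hv⟩
    refine ⟨v, hv0, ?_⟩
    have := congrFun hv
    funext i
    have h := this i
    rw [Matrix.sub_mulVec, Matrix.smul_mulVec, Matrix.one_mulVec] at h
    simp only [Pi.sub_apply, Pi.smul_apply, Pi.zero_apply, sub_eq_zero] at h
    simp only [Pi.smul_apply]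
    exact h.symm
  · rintro ⟨v, hv0, hv⟩
    refine ⟨v, hv0, ?_⟩
    funext i
    have h := congrFun hv i
    rw [Matrix.sub_mulVec, Matrix.smul_mulVec, Matrix.one_mulVec]
    simp only [Pi.sub_apply, Pi.smul_apply, Pi.zero_apply]
    simp only [Pi.smul_apply] at h
    rw [h, sub_self]

lemma real_eig_root {m : ℕ} (A : Matrix (Fin m) (Fin m) ℝ) (l : ℝ) (x : Fin m → ℝ)
    (hx0 : x ≠ 0) (hx : A.mulVec x = l • x) :
    (Polynomial.aeval (l : ℂ)) A.charpoly = 0 := by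
  rw [root_iff_eigenvector]
  refine ⟨fun i => (x i : ℂ), ?_, ?_⟩
  · intro h
    apply hx0
    funext i
    have := congrFun h i
    simpa using this
  · funext i
    have h := congrFun hx i
    simp only [Matrix.mulVec, dotProduct, Matrix.map_apply, Pi.smul_apply,
      smul_eq_mul, Complex.coe_algebraMap] at h ⊢
    rw [← Complex.ofReal_mul, ← h]
    push_cast
    rfl


lemma abs_root_le {M : Matrix (Fin n) (Fin n) ℝ} (hM : ∀ i j, 0 ≤ M i j) {l : ℝ}
    (hCW : ∀ (v : Fin n → ℝ) (t : ℝ), (∀ i, 0 ≤ v i) → v ≠ 0 →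
      (∀ i, t * v i ≤ M.mulVec v i) → t ≤ l) :
    ∀ z : ℂ, (Polynomial.aeval z) M.charpoly = 0 → ‖z‖ ≤ l := by
  intro z hz
  obtain ⟨v, hv0, hv⟩ := (root_iff_eigenvector M z).mp hz
  refine hCW (fun i => ‖v i‖) (‖z‖)
    (fun i => (norm_nonneg _)) ?_ ?_
  · intro h
    apply hv0
    funext i
    have := congrFun h i
    simpa using this
  · intro i
    have h := congrFun hv i
    simp only [Matrix.mulVec, dotProduct, Matrix.map_apply, Pi.smul_apply,
      smul_eq_mul, Complex.coe_algebraMap] at h ⊢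
    calc ‖z‖ * ‖v i‖ = ‖z * v i‖ := (norm_mul _ _).symm
      _ = ‖∑ j, (M i j : ℂ) * v j‖ := by rw [← h]
      _ ≤ ∑ j, ‖(M i j : ℂ) * v j‖ := norm_sum_le _ _
      _ = ∑ j, M i j * ‖v j‖ := by
          refine Finset.sum_congr rfl fun j _ => ?_
          rw [norm_mul, Complex.norm_real, Real.norm_eq_abs, abs_of_nonneg (hM i j)]

theorem perron (hn : 0 < n) {M : Matrix (Fin n) (Fin n) ℝ}
    (hM : ∀ i j, 0 ≤ M i j) (hirr : M.IsIrred) :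
    ∃ x : Fin n → ℝ, (∀ i, 0 < x i) ∧ M.mulVec x = M.specRad • x ∧
      ∀ (v : Fin n → ℝ) (t : ℝ), (∀ i, 0 ≤ v i) → v ≠ 0 →
        (∀ i, t * v i ≤ M.mulVec v i) → t ≤ M.specRad := by
  obtain ⟨l, x, hxpos, heig, hCW⟩ := perron_aux hn hM hirr
  have hxne : x ≠ 0 := by
    intro h
    have := congrFun h ⟨0, hn⟩
    simp at this
    exact absurd this (hxpos ⟨0, hn⟩).ne'
  have hl0 : 0 ≤ l := by
    refine hCW x 0 (fun i => (hxpos i).le) hxne fun i => ?_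
    rw [zero_mul]
    exact mulVec_nonneg hM (fun i => (hxpos i).le) i
  have hroot : (Polynomial.aeval (l : ℂ)) M.charpoly = 0 := real_eig_root M l x hxne heig
  have hmem : l ∈ {r : ℝ | ∃ z : ℂ, (Polynomial.aeval z) M.charpoly = 0 ∧ r = ‖z‖} :=
    ⟨(l : ℂ), hroot, by rw [Complex.norm_real, Real.norm_eq_abs, abs_of_nonneg hl0]⟩
  have hub : ∀ r ∈ {r : ℝ | ∃ z : ℂ, (Polynomial.aeval z) M.charpoly = 0 ∧ r = ‖z‖},
      r ≤ l := by
    rintro r ⟨z, hz, rfl⟩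
    exact abs_root_le hM hCW z hz
  have hspec : M.specRad = l := by
    rw [Matrix.specRad]
    exact le_antisymm (csSup_le ⟨l, hmem⟩ hub) (le_csSup ⟨l, hub⟩ hmem)
  rw [hspec]
  exact ⟨x, hxpos, heig, hCW⟩

lemma charpoly_transpose {m : ℕ} (A : Matrix (Fin m) (Fin m) ℝ) :
    A.transpose.charpoly = A.charpoly := by
  rw [Matrix.charpoly, Matrix.charpoly, ← Matrix.det_transpose]
  congr 1
  ext i j
  by_cases h : i = j
  · subst h; simp [Matrix.charmatrix_apply, Matrix.diagonal_apply]
  · simp [Matrix.charmatrix_apply, Matrix.diagonal_apply, h, Ne.symm h]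

lemma specRad_transpose (M : Matrix (Fin n) (Fin n) ℝ) :
    M.transpose.specRad = M.specRad := by
  rw [Matrix.specRad, Matrix.specRad, charpoly_transpose]

lemma transpose_irred {M : Matrix (Fin n) (Fin n) ℝ} (hirr : M.IsIrred) :
    M.transpose.IsIrred := by
  intro i j
  obtain ⟨k, hk, hpos⟩ := hirr j i
  exact ⟨k, hk, by rwa [← Matrix.transpose_pow, Matrix.transpose_apply]⟩

lemma pow_mulVec_eig {A : Matrix (Fin n) (Fin n) ℝ} {a : ℝ} {v : Fin n → ℝ}
    (h : A.mulVec v = a • v) (k : ℕ) : (A ^ k).mulVec v = a ^ k • v := by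
  induction k with
  | zero => simp [Matrix.one_mulVec]
  | succ m ih =>
    rw [pow_succ, ← Matrix.mulVec_mulVec, h, Matrix.mulVec_smul, ih, pow_succ, smul_smul,
      mul_comm]

lemma eig_unique (hn : 0 < n) {M : Matrix (Fin n) (Fin n) ℝ} {p : ℕ}
    (hp : ∀ i j, 0 < ((1 + M) ^ p) i j) {l : ℝ} {x : Fin n → ℝ}
    (hx : ∀ i, 0 < x i) (hxe : M.mulVec x = l • x) {u : Fin n → ℝ}
    (hu : M.mulVec u = l • u) : ∃ c : ℝ, u = c • x := by
  haveI : NeZero n := ⟨hn.ne'⟩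
  set c := Finset.univ.inf' Finset.univ_nonempty (fun i => u i / x i) with hc
  set v : Fin n → ℝ := u - c • x with hv
  have hv0 : ∀ i, 0 ≤ v i := by
    intro i
    have h1 : c ≤ u i / x i := Finset.inf'_le _ (Finset.mem_univ i)
    rw [le_div_iff₀ (hx i)] at h1
    simp only [hv, Pi.sub_apply, Pi.smul_apply, smul_eq_mul]
    linarith
  obtain ⟨i₀, -, hi₀⟩ := Finset.exists_mem_eq_inf' (Finset.univ_nonempty (α := Fin n))
    (fun i => u i / x i)
  have hvi₀ : v i₀ = 0 := by
    simp only [hv, Pi.sub_apply, Pi.smul_apply, smul_eq_mul]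
    have hce : c = u i₀ / x i₀ := hi₀
    rw [hce, div_mul_cancel₀ _ (hx i₀).ne', sub_self]
  have hve : M.mulVec v = l • v := by
    rw [hv, Matrix.mulVec_sub, Matrix.mulVec_smul, hxe, hu, smul_sub, smul_smul, smul_smul,
      mul_comm]
  refine ⟨c, ?_⟩
  by_contra hne
  have hvne : v ≠ 0 := by
    intro h
    apply hne
    have : u - c • x = 0 := h
    funext i
    have := congrFun this i
    simp only [Pi.sub_apply, Pi.zero_apply, sub_eq_zero] at this
    exact this
  have h1 : (1 + M).mulVec v = (1 + l) • v := by
    rw [Matrix.add_mulVec, Matrix.one_mulVec, hve]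
    funext i
    simp only [Pi.add_apply, Pi.smul_apply, smul_eq_mul]
    ring
  have h2 := pow_mulVec_eig h1 p
  have h3 : 0 < ((1 + M) ^ p).mulVec v i₀ := pos_mulVec_pos hp hv0 hvne i₀
  rw [h2] at h3
  simp only [Pi.smul_apply, hvi₀, smul_eq_mul, mul_zero] at h3
  exact lt_irrefl 0 h3

lemma super_to_eig {M : Matrix (Fin n) (Fin n) ℝ} {l : ℝ} {y : Fin n → ℝ}
    (hy : ∀ i, 0 < y i) (hyl : M.transpose.mulVec y = l • y) {v : Fin n → ℝ}
    (hle : ∀ i, l * v i ≤ M.mulVec v i) : M.mulVec v = l • v := by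
  have key : ∑ i, y i * (M.mulVec v i - l * v i) = 0 := by
    have h1 : ∑ i, y i * M.mulVec v i = ∑ j, (∑ i, M i j * y i) * v j := by
      simp only [Matrix.mulVec, dotProduct, Finset.mul_sum, Finset.sum_mul]
      rw [Finset.sum_comm]
      refine Finset.sum_congr rfl fun i _ => Finset.sum_congr rfl fun j _ => by ring
    have h2 : ∀ j, (∑ i, M i j * y i) = l * y j := by
      intro j
      have := congrFun hyl j
      simp only [Matrix.mulVec, dotProduct, Matrix.transpose_apply, Pi.smul_apply,
        smul_eq_mul] at this
      exact this
    simp only [mul_sub]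
    rw [Finset.sum_sub_distrib, h1]
    simp only [h2]
    ring_nf
  have hterm : ∀ i ∈ Finset.univ, 0 ≤ y i * (M.mulVec v i - l * v i) :=
    fun i _ => mul_nonneg (hy i).le (by linarith [hle i])
  have hz := (Finset.sum_eq_zero_iff_of_nonneg hterm).mp key
  funext i
  have := hz i (Finset.mem_univ i)
  have h3 : M.mulVec v i - l * v i = 0 := by
    rcases mul_eq_zero.mp this with h | h
    · exact absurd h (hy i).ne'
    · exact h
  simp only [Pi.smul_apply, smul_eq_mul]
  linarith

lemma aeval_ofReal {p : Polynomial ℝ} (c : ℝ) :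
    (Polynomial.aeval (c : ℂ)) p = ((p.eval c : ℝ) : ℂ) := by
  rw [Polynomial.aeval_def, Polynomial.eval₂_eq_eval_map]
  have : ((c : ℝ) : ℂ) = (algebraMap ℝ ℂ) c := rfl
  rw [this, Polynomial.eval_map, Polynomial.eval₂_at_apply]
  rfl

/-- If every complex root of the char. polynomial of `B` has modulus `< l`, with `0 ≤ l`,
then `det (l • 1 - B) > 0`. -/
lemma det_smul_one_sub_pos {m : ℕ} (B : Matrix (Fin m) (Fin m) ℝ) {l : ℝ} (hl : 0 ≤ l)
    (hroots : ∀ z : ℂ, (Polynomial.aeval z) B.charpoly = 0 → ‖z‖ < l) :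
    0 < (l • (1 : Matrix (Fin m) (Fin m) ℝ) - B).det := by
  rcases Nat.eq_zero_or_pos m with hm | hm
  · subst hm
    simp [Matrix.det_isEmpty]
  rw [← eval_charpoly]
  set p := B.charpoly with hp
  have hmono : p.Monic := B.charpoly_monic
  have hdeg : p.natDegree = m := by
    rw [hp, B.charpoly_natDegree_eq_dim, Fintype.card_fin]
  have hnoroot : ∀ t : ℝ, l ≤ t → p.eval t ≠ 0 := by
    intro t ht h0
    have hz : (Polynomial.aeval (t : ℂ)) p = 0 := by
      rw [aeval_ofReal, h0, Complex.ofReal_zero]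
    have := hroots _ hz
    rw [Complex.norm_real, Real.norm_eq_abs, abs_of_nonneg (hl.trans ht)] at this
    linarith
  have htend : Filter.Tendsto (fun t => p.eval t) Filter.atTop Filter.atTop := by
    refine Polynomial.tendsto_atTop_of_leadingCoeff_nonneg p ?_ ?_
    · rw [Polynomial.degree_eq_natDegree hmono.ne_zero, hdeg]
      exact_mod_cast hm
    · rw [hmono.leadingCoeff]
      exact zero_le_one
  obtain ⟨T, hT⟩ := ((htend.eventually_gt_atTop 0).and (Filter.eventually_ge_atTop l)).exists
  by_contra hle
  push_neg at hle
  have hcc : ContinuousOn (fun t => p.eval t) (Set.Icc l T) :=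
    (Polynomial.continuous p).continuousOn
  have h0mem : (0 : ℝ) ∈ Set.Icc (p.eval l) (p.eval T) := ⟨hle, hT.1.le⟩
  obtain ⟨c, hc, hc0⟩ := intermediate_value_Icc hT.2 hcc h0mem
  exact hnoroot c hc.1 hc0

/-- Strict bound on the roots of the char. polynomial of a principal submatrix. -/
lemma submatrix_root_lt {m : ℕ} {M : Matrix (Fin (m + 1)) (Fin (m + 1)) ℝ}
    (hM : ∀ i j, 0 ≤ M i j) (hirr : M.IsIrred) {p : ℕ}
    (hp : ∀ i j, 0 < ((1 + M) ^ p) i j) {x y : Fin (m + 1) → ℝ}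
    (hx : ∀ i, 0 < x i) (hxe : M.mulVec x = M.specRad • x)
    (hy : ∀ i, 0 < y i) (hye : M.transpose.mulVec y = M.specRad • y)
    (hCW : ∀ (v : Fin (m + 1) → ℝ) (t : ℝ), (∀ i, 0 ≤ v i) → v ≠ 0 →
      (∀ i, t * v i ≤ M.mulVec v i) → t ≤ M.specRad)
    (i₀ : Fin (m + 1)) :
    ∀ z : ℂ, (Polynomial.aeval z) (M.submatrix i₀.succAbove i₀.succAbove).charpoly = 0 →
      ‖z‖ < M.specRad := by
  intro z hz
  set B := M.submatrix i₀.succAbove i₀.succAbove with hB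
  obtain ⟨v, hv0, hv⟩ := (root_iff_eigenvector B z).mp hz
  set u : Fin m → ℝ := fun j => ‖v j‖ with hu
  have hun : ∀ j, 0 ≤ u j := fun j => norm_nonneg _
  have hune : u ≠ 0 := by
    intro h
    apply hv0
    funext j
    have := congrFun h j
    simpa [hu] using this
  have hsup : ∀ j, ‖z‖ * u j ≤ B.mulVec u j := by
    intro j
    have h := congrFun hv j
    simp only [Matrix.mulVec, dotProduct, Matrix.map_apply, Pi.smul_apply,
      smul_eq_mul, Complex.coe_algebraMap] at h ⊢
    calc ‖z‖ * ‖v j‖ = ‖z * v j‖ := (norm_mul _ _).symm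
      _ = ‖∑ j', (B j j' : ℂ) * v j'‖ := by rw [← h]
      _ ≤ ∑ j', ‖(B j j' : ℂ) * v j'‖ := norm_sum_le _ _
      _ = ∑ j', B j j' * ‖v j'‖ := by
          refine Finset.sum_congr rfl fun j' _ => ?_
          rw [norm_mul, Complex.norm_real, Real.norm_eq_abs, abs_of_nonneg (hB ▸ hM _ _ : (0:ℝ) ≤ B j j')]
  -- extend u by zero at i₀
  set w : Fin (m + 1) → ℝ := i₀.insertNth 0 u with hw
  have hwn : ∀ i, 0 ≤ w i := by
    refine Fin.succAboveCases i₀ ?_ ?_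
    · rw [hw, Fin.insertNth_apply_same]
    · intro j
      rw [hw, Fin.insertNth_apply_succAbove]
      exact hun j
  have hwne : w ≠ 0 := by
    intro h
    apply hune
    funext j
    have := congrFun h (i₀.succAbove j)
    rwa [hw, Fin.insertNth_apply_succAbove] at this
  have hwsup : ∀ i, ‖z‖ * w i ≤ M.mulVec w i := by
    refine Fin.succAboveCases i₀ ?_ ?_
    · rw [hw, Fin.insertNth_apply_same, mul_zero]
      exact mulVec_nonneg hM hwn i₀
    · intro j
      rw [hw, Fin.insertNth_apply_succAbove]
      refine le_trans (hsup j) ?_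
      simp only [Matrix.mulVec, dotProduct, hB, Matrix.submatrix_apply]
      rw [Fin.sum_univ_succAbove (fun l => M (i₀.succAbove j) l * w l) i₀]
      have : (0:ℝ) ≤ M (i₀.succAbove j) i₀ * w i₀ := mul_nonneg (hM _ _) (hwn i₀)
      have heq : ∀ j', M (i₀.succAbove j) (i₀.succAbove j') * u j'
          = M (i₀.succAbove j) (i₀.succAbove j') * w (i₀.succAbove j') := by
        intro j'
        rw [hw, Fin.insertNth_apply_succAbove]
      simp only [heq]
      linarith
  have hle : ‖z‖ ≤ M.specRad := hCW w _ hwn hwne hwsup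
  rcases lt_or_eq_of_le hle with h | h
  · exact h
  · exfalso
    -- equality case: w would be a positive eigenvector, contradicting w i₀ = 0
    have heig : M.mulVec w = M.specRad • w := by
      refine super_to_eig hy hye fun i => ?_
      rw [← h]
      exact hwsup i
    obtain ⟨c, hc⟩ := eig_unique (Nat.succ_pos m) hp hx hxe heig
    have h1 : w i₀ = 0 := by rw [hw, Fin.insertNth_apply_same]
    have h2 : w i₀ = c * x i₀ := by rw [hc]; simp
    have hc0 : c = 0 := by
      rcases mul_eq_zero.mp (h1 ▸ h2.symm) with h | h
      · exact h
      · exact absurd h (hx i₀).ne'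
    apply hwne
    rw [hc, hc0, zero_smul]

end PFaux

/-- For a nonnegative irreducible matrix `M` with Perron–Frobenius eigenvalue `λ = ρ(M)`, the
adjugate of `λ I - M` is entrywise strictly positive; in particular each of its columns is a
nonzero eigenvector of `M` for the eigenvalue `λ`. -/
theorem adjugate_positive_eigenvectors {n : ℕ}
    (M : Matrix (Fin n) (Fin n) ℝ) (hM : M.IsNonneg) (hirr : M.IsIrred) :
    (∀ i j, 0 < (M.specRad • (1 : Matrix (Fin n) (Fin n) ℝ) - M).adjugate i j) ∧
    ∀ j : Fin n,
      (fun i => (M.specRad • (1 : Matrix (Fin n) (Fin n) ℝ) - M).adjugate i j) ≠ 0 ∧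
      M.mulVec (fun i => (M.specRad • (1 : Matrix (Fin n) (Fin n) ℝ) - M).adjugate i j)
        = M.specRad • fun i =>
            (M.specRad • (1 : Matrix (Fin n) (Fin n) ℝ) - M).adjugate i j := by
  rcases Nat.eq_zero_or_pos n with hn | hn
  · subst hn
    exact ⟨fun i => i.elim0, fun j => j.elim0⟩
  obtain ⟨m, rfl⟩ : ∃ m, n = m + 1 := ⟨n - 1, (Nat.succ_pred_eq_of_pos hn).symm⟩
  have hM' : ∀ i j, 0 ≤ M i j := hM
  obtain ⟨p, hp⟩ := PFaux.exists_pow_pos hM' hirr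
  obtain ⟨x, hx, hxe, hCW⟩ := PFaux.perron hn hM' hirr
  have hMT : ∀ i j, 0 ≤ M.transpose i j := fun i j => hM' j i
  obtain ⟨y, hy, hye', hCWT⟩ := PFaux.perron hn hMT (PFaux.transpose_irred hirr)
  have hye : M.transpose.mulVec y = M.specRad • y := by
    rwa [PFaux.specRad_transpose] at hye'
  set l := M.specRad with hldef
  set A := l • (1 : Matrix (Fin (m+1)) (Fin (m+1)) ℝ) - M with hA
  have hxne : x ≠ 0 := by
    intro h
    have := congrFun h 0
    simp only [Pi.zero_apply] at this
    exact absurd this (hx 0).ne'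
  have hl0 : 0 ≤ l := by
    refine hCW x 0 (fun i => (hx i).le) hxne fun i => ?_
    rw [zero_mul]
    exact PFaux.mulVec_nonneg hM' (fun i => (hx i).le) i
  have hAx : A.mulVec x = 0 := by
    rw [hA, Matrix.sub_mulVec, Matrix.smul_mulVec, Matrix.one_mulVec, hxe, sub_self]
  have hdet : A.det = 0 := Matrix.exists_mulVec_eq_zero_iff.mp ⟨x, hxne, hAx⟩
  -- diagonal entries of the adjugate are positive
  have hdiag : ∀ i, 0 < A.adjugate i i := by
    intro i
    rw [Matrix.adjugate_fin_succ_eq_det_submatrix]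
    have he : (-1 : ℝ) ^ ((i:ℕ) + (i:ℕ)) = 1 := Even.neg_one_pow ⟨(i:ℕ), rfl⟩
    rw [he, one_mul]
    have hsub : A.submatrix i.succAbove i.succAbove
        = l • (1 : Matrix (Fin m) (Fin m) ℝ) - M.submatrix i.succAbove i.succAbove := by
      ext j k
      simp only [Matrix.submatrix_apply, hA, Matrix.sub_apply, Matrix.smul_apply,
        Matrix.one_apply, smul_eq_mul]
      by_cases h : j = k
      · subst h
        simp
      · rw [if_neg h, if_neg fun hc => h (Fin.succAbove_right_injective hc)]
    rw [hsub]
    exact PFaux.det_smul_one_sub_pos _ hl0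
      (PFaux.submatrix_root_lt hM' hirr hp hx hxe hy hye hCW i)
  -- each column of the adjugate lies in the eigenspace
  have hker : ∀ j, M.mulVec (fun i => A.adjugate i j) = l • (fun i => A.adjugate i j) := by
    intro j
    have hcol0 : A.mulVec (fun i => A.adjugate i j) = 0 := by
      funext i
      have h1 := congrFun (congrFun (Matrix.mul_adjugate A) i) j
      rw [hdet, zero_smul] at h1
      simpa [Matrix.mulVec, dotProduct, Matrix.mul_apply] using h1
    have h2 := congrFun hcol0
    funext i
    have h3 := h2 i
    rw [hA, Matrix.sub_mulVec, Matrix.smul_mulVec, Matrix.one_mulVec] at h3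
    simp only [Pi.sub_apply, Pi.smul_apply, Pi.zero_apply, smul_eq_mul, sub_eq_zero] at h3
    simp only [Pi.smul_apply, smul_eq_mul]
    linarith
  have hcol : ∀ j, ∃ c, (fun i => A.adjugate i j) = c • x := fun j =>
    PFaux.eig_unique hn hp hx hxe (hker j)
  have hpos : ∀ i j, 0 < A.adjugate i j := by
    intro i j
    obtain ⟨c, hc⟩ := hcol j
    have hcj := congrFun hc j
    have hci := congrFun hc i
    simp only [Pi.smul_apply, smul_eq_mul] at hcj hci
    have hcpos : 0 < c := by nlinarith [hdiag j, hx j]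
    rw [hci]
    exact mul_pos hcpos (hx i)
  exact ⟨hpos, fun j => ⟨fun h0 => absurd (congrFun h0 j) (hpos j j).ne', hker j⟩⟩
end
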